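/- arXiv:2603.07273 — 3 statements merged into one kernel-verified Lean document; each statement's English description precedes it below -/
import Mathlib

section
/- Basu's theorem: Let 𝒫 = {P_θ : θ ∈ Θ} be a family of probability measures on a measurable space (𝒳, 𝒜), let T be a statistic that is sufficient and boundedly complete for 𝒫, and let W be an ancillary statistic (the law of W under P_θ does not depend on θ). Then W is independent of T under every P_θ, θ ∈ Θ. -/
open MeasureTheory ProbabilityTheory Filter Set
open scoped NNReal ENNReal BigOperators Topology

/-- Doob–Dynkin factorization for real-valued strongly measurable functions. -/
lemma basu_factor {Ω 𝒯 : Type*} [m𝒯 : MeasurableSpace 𝒯] {T : Ω → 𝒯} {g : Ω → ℝ}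
    (hg : StronglyMeasurable[MeasurableSpace.comap T m𝒯] g) :
    ∃ φ : 𝒯 → ℝ, Measurable φ ∧ ∀ ω, g ω = φ (T ω) := by
  letI m' : MeasurableSpace Ω := MeasurableSpace.comap T m𝒯
  -- Step 1: every simple function w.r.t. `m'` factors through `T`.
  have hsimp : ∀ s : @SimpleFunc Ω m' ℝ, ∃ ψ : 𝒯 → ℝ, Measurable ψ ∧ ∀ ω, s ω = ψ (T ω) := by
    intro s
    refine SimpleFunc.induction ?_ ?_ s
    · intro c u hu
      obtain ⟨A, hA, rfl⟩ := hu
      refine ⟨A.indicator fun _ => c, measurable_const.indicator hA, fun ω => ?_⟩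
      by_cases h : T ω ∈ A <;>
        simp [SimpleFunc.piecewise, Set.piecewise, Set.indicator, Set.mem_preimage, h]
    · rintro s₁ s₂ _ ⟨ψ₁, hψ₁, h₁⟩ ⟨ψ₂, hψ₂, h₂⟩
      exact ⟨fun t => ψ₁ t + ψ₂ t, hψ₁.add hψ₂, fun ω => by
        simp [SimpleFunc.coe_add, h₁ ω, h₂ ω]⟩
  choose ψ hψ_meas hψ using fun n => hsimp (hg.approx n)
  -- Step 2: take pointwise limits where they exist.
  have hC : MeasurableSet {t : 𝒯 | ∃ c, Tendsto (fun n => ψ n t) atTop (𝓝 c)} :=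
    measurableSet_exists_tendsto hψ_meas
  classical
  set φ : 𝒯 → ℝ := fun t =>
    if h : ∃ c, Tendsto (fun n => ψ n t) atTop (𝓝 c) then h.choose else 0 with hφ_def
  have hφ_tendsto : ∀ t, Tendsto
      (fun n => ({t | ∃ c, Tendsto (fun n => ψ n t) atTop (𝓝 c)}.indicator (ψ n)) t)
      atTop (𝓝 (φ t)) := by
    intro t
    by_cases h : ∃ c, Tendsto (fun n => ψ n t) atTop (𝓝 c)
    · have hmem : t ∈ {t | ∃ c, Tendsto (fun n => ψ n t) atTop (𝓝 c)} := h
      simp only [Set.indicator_of_mem hmem, hφ_def, dif_pos h]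
      exact h.choose_spec
    · have hmem : t ∉ {t | ∃ c, Tendsto (fun n => ψ n t) atTop (𝓝 c)} := h
      simp only [Set.indicator_of_notMem hmem, hφ_def, dif_neg h]
      exact tendsto_const_nhds
  have hφ_meas : Measurable φ :=
    measurable_of_tendsto_metrizable (fun n => (hψ_meas n).indicator hC)
      (tendsto_pi_nhds.mpr hφ_tendsto)
  refine ⟨φ, hφ_meas, fun ω => ?_⟩
  have htend : Tendsto (fun n => ψ n (T ω)) atTop (𝓝 (g ω)) := by
    have := hg.tendsto_approx ω
    simpa only [hψ] using this
  have hmem : ∃ c, Tendsto (fun n => ψ n (T ω)) atTop (𝓝 c) := ⟨g ω, htend⟩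
  have : φ (T ω) = hmem.choose := by rw [hφ_def]; exact dif_pos hmem
  rw [this]
  exact tendsto_nhds_unique htend hmem.choose_spec

/-- Basu's theorem: if `T` is sufficient and boundedly complete for the family
`{P θ}` and `W` is ancillary, then `W` is independent of `T` under every `P θ`. -/
theorem basu_theorem
    {Ω 𝒯 𝒲 Θ : Type*} [MeasurableSpace Ω] [MeasurableSpace 𝒯] [MeasurableSpace 𝒲]
    (P : Θ → Measure Ω) (hP : ∀ θ, IsProbabilityMeasure (P θ))
    (T : Ω → 𝒯) (W : Ω → 𝒲) (hT : Measurable T) (hW : Measurable W)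
    -- sufficiency: conditional expectations given σ(T) admit versions not depending on θ
    (hsuff : ∀ f : Ω → ℝ, Measurable f → (∃ C, ∀ ω, |f ω| ≤ C) →
      ∃ g : Ω → ℝ,
        StronglyMeasurable[MeasurableSpace.comap T inferInstance] g ∧
        ∀ θ, (P θ)[f | MeasurableSpace.comap T inferInstance] =ᵐ[P θ] g)
    -- bounded completeness of T
    (hcomplete : ∀ g : 𝒯 → ℝ, Measurable g → (∃ C, ∀ t, |g t| ≤ C) →
      (∀ θ, ∫ ω, g (T ω) ∂(P θ) = 0) → ∀ θ, (fun ω => g (T ω)) =ᵐ[P θ] (0 : Ω → ℝ))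
    -- ancillarity of W
    (hanc : ∀ θ θ', (P θ).map W = (P θ').map W) :
    ∀ θ, IndepFun T W (P θ) := by
  intro θ₀
  haveI := fun θ => hP θ
  have hm : MeasurableSpace.comap T inferInstance ≤ _ := Measurable.comap_le hT
  haveI : ∀ θ, SigmaFinite ((P θ).trim hm) := fun θ => inferInstance
  rw [indepFun_iff_measure_inter_preimage_eq_mul]
  intro A B hA hB
  -- the indicator of W ⁻¹' B
  set f : Ω → ℝ := (W ⁻¹' B).indicator fun _ => (1 : ℝ) with hf_def
  have hWB : MeasurableSet (W ⁻¹' B) := hW hB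
  have hf_meas : Measurable f := measurable_const.indicator hWB
  have hf_bdd : ∀ ω, |f ω| ≤ 1 := by
    intro ω
    simp only [hf_def, Set.indicator]
    split <;> simp
  have hf_int : ∀ θ, Integrable f (P θ) :=
    fun θ => (integrable_const (1 : ℝ)).indicator hWB
  have hf_nonneg : ∀ ω, 0 ≤ f ω := by
    intro ω; simp only [hf_def, Set.indicator]; split <;> simp
  have hf_le_one : ∀ ω, f ω ≤ 1 := by
    intro ω; simp only [hf_def, Set.indicator]; split <;> simp
  have hf_integral : ∀ θ, ∫ ω, f ω ∂(P θ) = ((P θ) (W ⁻¹' B)).toReal := by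
    intro θ
    rw [hf_def, integral_indicator_const (1 : ℝ) hWB, smul_eq_mul, mul_one]
    rfl
  -- ancillarity: the value (P θ (W⁻¹ B)).toReal doesn't depend on θ
  set c : ℝ := ((P θ₀) (W ⁻¹' B)).toReal with hc_def
  have hc_all : ∀ θ, ((P θ) (W ⁻¹' B)).toReal = c := by
    intro θ
    have h1 : (P θ) (W ⁻¹' B) = ((P θ).map W) B := (Measure.map_apply hW hB).symm
    have h2 : (P θ₀) (W ⁻¹' B) = ((P θ₀).map W) B := (Measure.map_apply hW hB).symm
    rw [hc_def, h1, h2, hanc θ θ₀]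
  have hc_nonneg : 0 ≤ c := ENNReal.toReal_nonneg
  -- sufficiency-produced version g, factored through T
  obtain ⟨g, hg_sm, hg⟩ := hsuff f hf_meas ⟨1, hf_bdd⟩
  obtain ⟨φ, hφ_meas, hφ⟩ := basu_factor hg_sm
  -- truncation of φ to [0,1]
  set φ' : 𝒯 → ℝ := fun t => max 0 (min (φ t) 1) with hφ'_def
  have hφ'_meas : Measurable φ' := measurable_const.max (hφ_meas.min measurable_const)
  have hφ'_bdd : ∀ t, 0 ≤ φ' t ∧ φ' t ≤ 1 := by
    intro t
    exact ⟨le_max_left _ _, max_le (by norm_num) (min_le_right _ _)⟩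
  -- pointwise a.e. under each θ: φ' ∘ T = condexp of f
  have key1 : ∀ θ, (fun ω => φ' (T ω))
      =ᵐ[P θ] (P θ)[f | MeasurableSpace.comap T inferInstance] := by
    intro θ
    have h_nonneg : 0 ≤ᵐ[P θ] (P θ)[f | MeasurableSpace.comap T inferInstance] :=
      condExp_nonneg (Filter.Eventually.of_forall hf_nonneg)
    have h_le_one : (P θ)[f | MeasurableSpace.comap T inferInstance]
        ≤ᵐ[P θ] fun _ => (1 : ℝ) := by
      have hmono := condExp_mono (μ := P θ) (m := MeasurableSpace.comap T inferInstance)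
        (hf_int θ) (integrable_const 1) (Filter.Eventually.of_forall hf_le_one)
      have h1 : (P θ)[(fun _ => (1 : ℝ)) | MeasurableSpace.comap T inferInstance]
          = fun _ => (1 : ℝ) := condExp_const hm 1
      rwa [h1] at hmono
    filter_upwards [hg θ, h_nonneg, h_le_one] with ω hω h0 h1
    have hgφ : g ω = φ (T ω) := hφ ω
    have heq : φ (T ω) = ((P θ)[f | MeasurableSpace.comap T inferInstance]) ω := by
      rw [← hgφ, hω]
    simp only [hφ'_def, heq]
    have h0' : (0 : ℝ) ≤ ((P θ)[f | MeasurableSpace.comap T inferInstance]) ω := h0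
    rw [min_eq_left h1, max_eq_right h0']
  -- completeness input: ∫ (φ'(T ω) - c) = 0 for all θ
  have hint0 : ∀ θ, ∫ ω, (φ' (T ω) - c) ∂(P θ) = 0 := by
    intro θ
    have hφ'T_int : Integrable (fun ω => φ' (T ω)) (P θ) := by
      refine (integrable_const (1 : ℝ)).mono' ((hφ'_meas.comp hT).aestronglyMeasurable) ?_
      refine Filter.Eventually.of_forall fun ω => ?_
      rw [Real.norm_eq_abs, abs_le]
      exact ⟨by linarith [(hφ'_bdd (T ω)).1], (hφ'_bdd (T ω)).2⟩
    rw [integral_sub hφ'T_int (integrable_const c), integral_const]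
    have h1 : ∫ ω, φ' (T ω) ∂(P θ)
        = ∫ ω, ((P θ)[f | MeasurableSpace.comap T inferInstance]) ω ∂(P θ) :=
      integral_congr_ae (key1 θ)
    rw [h1, integral_condExp hm, hf_integral θ, hc_all θ]
    simp [measure_univ]
  -- apply bounded completeness
  have hcomp := hcomplete (fun t => φ' t - c) (hφ'_meas.sub measurable_const)
    ⟨1 + |c|, fun t => by
      have h := hφ'_bdd t
      have h1 := le_abs_self c
      have h2 := neg_abs_le c
      show |φ' t - c| ≤ 1 + |c|
      rw [abs_le]
      exact ⟨by linarith [h.1, h.2], by linarith [h.1, h.2]⟩⟩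
    hint0
  have hconst : (fun ω => φ' (T ω)) =ᵐ[P θ₀] fun _ => c := by
    filter_upwards [hcomp θ₀] with ω hω
    have h : φ' (T ω) - c = 0 := hω
    linarith
  -- so the conditional expectation is a.e. constant c under P θ₀
  have hce_const : (P θ₀)[f | MeasurableSpace.comap T inferInstance] =ᵐ[P θ₀] fun _ => c :=
    ((key1 θ₀).symm.trans hconst)
  -- final computation
  have hTA : MeasurableSet[MeasurableSpace.comap T inferInstance] (T ⁻¹' A) := ⟨A, hA, rfl⟩
  have hTA0 : MeasurableSet (T ⁻¹' A) := hT hA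
  have hside1 : ∫ ω in T ⁻¹' A, f ω ∂(P θ₀) = ((P θ₀) (T ⁻¹' A ∩ W ⁻¹' B)).toReal := by
    rw [hf_def, setIntegral_indicator hWB, setIntegral_const, smul_eq_mul, mul_one]
    rfl
  have hside2 : ∫ ω in T ⁻¹' A, f ω ∂(P θ₀)
      = ∫ ω in T ⁻¹' A, ((P θ₀)[f | MeasurableSpace.comap T inferInstance]) ω ∂(P θ₀) :=
    (setIntegral_condExp hm (hf_int θ₀) hTA).symm
  have hside3 : ∫ ω in T ⁻¹' A, ((P θ₀)[f | MeasurableSpace.comap T inferInstance]) ω ∂(P θ₀)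
      = ((P θ₀) (T ⁻¹' A)).toReal * c := by
    rw [setIntegral_congr_ae hTA0 (hce_const.mono fun ω hω _ => hω), setIntegral_const,
      smul_eq_mul]
    rfl
  have hreal : ((P θ₀) (T ⁻¹' A ∩ W ⁻¹' B)).toReal
      = ((P θ₀) (T ⁻¹' A)).toReal * ((P θ₀) (W ⁻¹' B)).toReal := by
    rw [← hside1, hside2, hside3, hc_def]
  have h_ne_top1 : (P θ₀) (T ⁻¹' A ∩ W ⁻¹' B) ≠ ∞ := measure_ne_top _ _
  have h_ne_top2 : (P θ₀) (T ⁻¹' A) * (P θ₀) (W ⁻¹' B) ≠ ∞ :=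
    ENNReal.mul_ne_top (measure_ne_top _ _) (measure_ne_top _ _)
  rw [← ENNReal.toReal_eq_toReal_iff' h_ne_top1 h_ne_top2, ENNReal.toReal_mul]
  exact hreal
end

section
/- Basu's first theorem (for mutually absolutely continuous families): Let 𝒫 = {P_θ : θ ∈ Θ} be a family of pairwise mutually absolutely continuous probability measures on (𝒳, 𝒜) and let S be a sufficient statistic for 𝒫. If a statistic W is independent of S under P_θ for every θ ∈ Θ, then W is ancillary: its distribution under P_θ is the same for all θ. -/
open MeasureTheory ProbabilityTheory
open scoped NNReal ENNReal BigOperators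

/-- Basu's first theorem for mutually absolutely continuous families: if `S` is
sufficient and the statistic `W` is independent of `S` under every `P θ`, then `W`
is ancillary: its law under `P θ` does not depend on `θ`. -/
theorem basu_first_theorem
    {Ω 𝒮 𝒲 Θ : Type*} [MeasurableSpace Ω] [MeasurableSpace 𝒮] [MeasurableSpace 𝒲]
    (P : Θ → Measure Ω) (hP : ∀ θ, IsProbabilityMeasure (P θ))
    (hac : ∀ θ θ', P θ ≪ P θ')
    (S : Ω → 𝒮) (W : Ω → 𝒲) (hS : Measurable S) (hW : Measurable W)
    -- sufficiency of S
    (hsuff : ∀ f : Ω → ℝ, Measurable f → (∃ C, ∀ ω, |f ω| ≤ C) →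
      ∃ g : Ω → ℝ,
        StronglyMeasurable[MeasurableSpace.comap S inferInstance] g ∧
        ∀ θ, (P θ)[f | MeasurableSpace.comap S inferInstance] =ᵐ[P θ] g)
    -- W independent of S under every P θ
    (hindep : ∀ θ, IndepFun S W (P θ)) :
    ∀ θ θ', (P θ).map W = (P θ').map W := by
  intro θ θ'
  haveI := hP θ; haveI := hP θ'
  -- suffices equality of the measures of all measurable sets
  ext B hB
  rw [Measure.map_apply hW hB, Measure.map_apply hW hB]
  -- indicator function of W ⁻¹' B
  set f : Ω → ℝ := (W ⁻¹' B).indicator (fun _ => 1) with hf_def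
  have hfmeas : Measurable f := (measurable_const.indicator (hW hB))
  have hfbdd : ∃ C, ∀ ω, |f ω| ≤ C := by
    refine ⟨1, fun ω => ?_⟩
    by_cases h : ω ∈ W ⁻¹' B <;> simp [hf_def, Set.indicator_apply, h]
  obtain ⟨g, hg_meas, hg⟩ := hsuff f hfmeas hfbdd
  have hfsm : StronglyMeasurable[MeasurableSpace.comap W inferInstance] f := by
    refine StronglyMeasurable.indicator stronglyMeasurable_const ⟨B, hB, rfl⟩
  -- For each parameter, the conditional expectation is the constant ∫ f
  have key : ∀ τ : Θ, g =ᵐ[P τ] fun _ => ∫ ω, f ω ∂(P τ) := by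
    intro τ
    haveI := hP τ
    have hle₁ : MeasurableSpace.comap W inferInstance ≤ ‹MeasurableSpace Ω› :=
      hW.comap_le
    have hle₂ : MeasurableSpace.comap S inferInstance ≤ ‹MeasurableSpace Ω› :=
      hS.comap_le
    have hindp : Indep (MeasurableSpace.comap W inferInstance)
        (MeasurableSpace.comap S inferInstance) (P τ) := (hindep τ).symm
    have := condExp_indep_eq (μ := P τ) (f := f) hle₁ hle₂ hfsm hindp
    exact ((hg τ).symm.trans this)
  -- integrals of f are the measures of W ⁻¹' B
  have hint : ∀ τ : Θ, ∫ ω, f ω ∂(P τ) = ((P τ) (W ⁻¹' B)).toReal := by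
    intro τ
    haveI := hP τ
    rw [hf_def, integral_indicator (hW hB)]
    simp [measureReal_def]
  -- from mutual absolute continuity, the two constants agree Pθ-a.e.
  have h1 : (fun _ : Ω => ∫ ω, f ω ∂(P θ)) =ᵐ[P θ] fun _ => ∫ ω, f ω ∂(P θ') := by
    have h2 : g =ᵐ[P θ] fun _ => ∫ ω, f ω ∂(P θ') :=
      ((hac θ θ').ae_le (key θ'))
    exact (key θ).symm.trans h2
  have hconst : ∫ ω, f ω ∂(P θ) = ∫ ω, f ω ∂(P θ') := by
    by_contra hne
    have : ∀ᵐ ω ∂(P θ), False := by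
      filter_upwards [h1] with ω hω
      exact hne hω
    rw [ae_iff] at this
    simp only [not_false_eq_true, Set.setOf_true] at this
    exact (IsProbabilityMeasure.ne_zero (P θ)) (Measure.measure_univ_eq_zero.mp this)
  have := hconst
  rw [hint θ, hint θ'] at this
  exact (ENNReal.toReal_eq_toReal_iff' (measure_ne_top _ _) (measure_ne_top _ _)).mp this
end

section
/- Basu's third theorem (maximal ancillarity criterion): Let 𝒫 be a family of mutually absolutely continuous probability measures on (Ω, 𝒜). Let 𝒜_suff ⊆ 𝒜 be a boundedly complete and sufficient sub-σ-field for 𝒫, and let 𝒜_anc ⊆ 𝒜 be an ancillary sub-σ-field containing all 𝒫-null sets such that σ(𝒜_suff ∪ 𝒜_anc) = 𝒜. Then 𝒜_anc is maximal ancillary: any ancillary sub-σ-field 𝒜' ⊆ 𝒜 containing 𝒜_anc equals 𝒜_anc (up to 𝒫-null sets). -/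
open MeasureTheory ProbabilityTheory
open scoped NNReal ENNReal BigOperators symmDiff

section Aux

/-- Clipping a version of a conditional expectation of an indicator to `[0,1]` gives
again a version of the conditional expectation. -/
lemma clip_condexp_ae_eq' {Ω : Type*} (m : MeasurableSpace Ω) [mΩ : MeasurableSpace Ω]
    (μ : Measure Ω) [IsProbabilityMeasure μ]
    (hm : m ≤ mΩ) {B : Set Ω} (hB : MeasurableSet[mΩ] B)
    {g : Ω → ℝ} (hg : μ[B.indicator (fun _ => (1:ℝ))|m] =ᵐ[μ] g) :
    (fun ω => max 0 (min (g ω) 1)) =ᵐ[μ] μ[B.indicator (fun _ => (1:ℝ))|m] := by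
  have hfint : Integrable (B.indicator (fun _ => (1:ℝ))) μ := (integrable_const 1).indicator hB
  have h0 : 0 ≤ᵐ[μ] μ[B.indicator (fun _ => (1:ℝ))|m] :=
    condExp_nonneg (ae_of_all _ fun ω => Set.indicator_nonneg (fun _ _ => zero_le_one) ω)
  have h1 : μ[B.indicator (fun _ => (1:ℝ))|m] ≤ᵐ[μ] fun _ => (1:ℝ) := by
    have hle : B.indicator (fun _ => (1:ℝ)) ≤ᵐ[μ] fun _ => (1:ℝ) :=
      ae_of_all _ fun ω => by
        by_cases h : ω ∈ B <;> simp [Set.indicator_apply, h]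
    calc μ[B.indicator (fun _ => (1:ℝ))|m] ≤ᵐ[μ] μ[(fun _ => (1:ℝ))|m] :=
          condExp_mono hfint (integrable_const 1) hle
      _ =ᵐ[μ] fun _ => (1:ℝ) := by rw [condExp_const hm]
  filter_upwards [hg, h0, h1] with ω hgω h0ω h1ω
  simp only [Pi.zero_apply] at h0ω
  rw [← hgω, min_eq_left h1ω, max_eq_right h0ω]

end Aux

/-- Basu's third theorem (maximal ancillarity criterion) for families of mutually
absolutely continuous probability measures: if `mSuff` is boundedly complete and
sufficient, `mAnc` is ancillary, contains all null sets, and `mSuff ⊔ mAnc` is the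
whole σ-field, then `mAnc` is maximal ancillary: every ancillary sub-σ-field
containing `mAnc` coincides with it up to null sets. -/
theorem basu_third_theorem
    {Ω Θ : Type*} [mΩ : MeasurableSpace Ω]
    (P : Θ → Measure Ω) (hP : ∀ θ, IsProbabilityMeasure (P θ))
    (hac : ∀ θ θ', P θ ≪ P θ')
    (mSuff mAnc : MeasurableSpace Ω) (hSle : mSuff ≤ mΩ) (hAle : mAnc ≤ mΩ)
    -- sufficiency of mSuff
    (hsuff : ∀ f : Ω → ℝ, Measurable f → (∃ C, ∀ ω, |f ω| ≤ C) →
      ∃ g : Ω → ℝ, StronglyMeasurable[mSuff] g ∧ ∀ θ, (P θ)[f | mSuff] =ᵐ[P θ] g)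
    -- bounded completeness of mSuff
    (hcomplete : ∀ Y : Ω → ℝ, Measurable[mSuff] Y → (∃ C, ∀ ω, |Y ω| ≤ C) →
      (∀ θ, ∫ ω, Y ω ∂(P θ) = 0) → ∀ θ, Y =ᵐ[P θ] (0 : Ω → ℝ))
    -- ancillarity of mAnc
    (hanc : ∀ s, MeasurableSet[mAnc] s → ∀ θ θ', P θ s = P θ' s)
    -- mAnc contains all 𝒫-null sets
    (hnull : ∀ s, MeasurableSet[mΩ] s → (∀ θ, P θ s = 0) → MeasurableSet[mAnc] s)
    -- σ(mSuff ∪ mAnc) = mΩ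
    (hgen : mSuff ⊔ mAnc = mΩ) :
    ∀ m' : MeasurableSpace Ω, m' ≤ mΩ → mAnc ≤ m' →
      (∀ s, MeasurableSet[m'] s → ∀ θ θ', P θ s = P θ' s) →
      ∀ s, MeasurableSet[m'] s →
        ∃ t, MeasurableSet[mAnc] t ∧ ∀ θ, P θ (s ∆ t) = 0 := by
  intro m' hm'le hm'ge hm'anc s hs
  letI : MeasurableSpace Ω := mΩ
  rcases isEmpty_or_nonempty Θ with hΘ | ⟨⟨θ0⟩⟩
  · exact ⟨∅, @MeasurableSet.empty Ω mAnc, fun θ => (hΘ.false θ).elim⟩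
  haveI : ∀ θ, IsProbabilityMeasure (P θ) := hP
  have hsm : MeasurableSet[mΩ] s := hm'le s hs
  -- the π-system of rectangles
  set πSys : Set (Set Ω) :=
    {u | ∃ A B : Set Ω, MeasurableSet[mSuff] A ∧ MeasurableSet[mAnc] B ∧ u = A ∩ B} with hπSys
  have hπ : IsPiSystem πSys := by
    rintro u1 ⟨A1, B1, hA1, hB1, rfl⟩ u2 ⟨A2, B2, hA2, hB2, rfl⟩ -
    exact ⟨A1 ∩ A2, B1 ∩ B2, hA1.inter hA2, hB1.inter hB2,
      (Set.inter_inter_inter_comm A1 B1 A2 B2)⟩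
  have hgenπ : mΩ = MeasurableSpace.generateFrom πSys := by
    rw [← hgen]
    refine le_antisymm (sup_le ?_ ?_) (MeasurableSpace.generateFrom_le ?_)
    · intro u hu
      exact MeasurableSpace.measurableSet_generateFrom
        ⟨u, Set.univ, hu, MeasurableSet.univ, (Set.inter_univ u).symm⟩
    · intro u hu
      exact MeasurableSpace.measurableSet_generateFrom
        ⟨Set.univ, u, MeasurableSet.univ, hu, (Set.univ_inter u).symm⟩
    · rintro u ⟨A, B, hA, hB, rfl⟩
      exact ((le_sup_left : mSuff ≤ mSuff ⊔ mAnc) A hA).inter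
        ((le_sup_right : mAnc ≤ mSuff ⊔ mAnc) B hB)
  -- Extension of sufficiency: every indicator of an `mΩ`-measurable set admits a common
  -- `[0,1]`-valued `mSuff`-measurable version of its conditional expectation given `mSuff`.
  have hsuffInd : ∀ u : Set Ω, MeasurableSet[mΩ] u →
      ∃ g : Ω → ℝ, Measurable[mSuff] g ∧ (∀ ω, 0 ≤ g ω ∧ g ω ≤ 1) ∧
        ∀ θ, (P θ)[u.indicator (fun _ => (1:ℝ)) | mSuff] =ᵐ[P θ] g := by
    have H := MeasurableSpace.induction_on_inter
      (C := fun u _ => ∃ g : Ω → ℝ, Measurable[mSuff] g ∧ (∀ ω, 0 ≤ g ω ∧ g ω ≤ 1) ∧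
        ∀ θ, (P θ)[u.indicator (fun _ => (1:ℝ)) | mSuff] =ᵐ[P θ] g)
      hgenπ hπ ?_ ?_ ?_ ?_
    · exact fun u hu => H u hu
    · -- empty set
      refine ⟨fun _ => 0, measurable_const, fun ω => ⟨le_rfl, zero_le_one⟩, fun θ => ?_⟩
      have hz : ((∅ : Set Ω).indicator (fun _ => (1:ℝ))) = (0 : Ω → ℝ) :=
        funext fun ω => by simp
      rw [hz, condExp_zero]
      exact ae_of_all _ fun ω => rfl
    · -- rectangles
      rintro u ⟨A, B, hA, hB, rfl⟩
      have hAm : MeasurableSet[mΩ] A := hSle A hA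
      have hBm : MeasurableSet[mΩ] B := hAle B hB
      have hfB : Measurable[mAnc] (B.indicator (fun _ => (1:ℝ))) :=
        measurable_const.indicator hB
      obtain ⟨gB, hgBm, hgB⟩ := hsuff _ hfB ⟨1, fun ω => by
        by_cases h : ω ∈ B <;> simp [Set.indicator_apply, h]⟩
      set gB' : Ω → ℝ := fun ω => max 0 (min (gB ω) 1) with hgB'def
      have hgB' : ∀ θ, gB' =ᵐ[P θ] (P θ)[B.indicator (fun _ => (1:ℝ))|mSuff] := fun θ =>
        clip_condexp_ae_eq' mSuff (P θ) hSle hBm (hgB θ)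
      have hgB'm : Measurable[mSuff] gB' :=
        measurable_const.max (hgBm.measurable.min measurable_const)
      refine ⟨fun ω => A.indicator (fun _ => (1:ℝ)) ω * gB' ω,
        (measurable_const.indicator hA).mul hgB'm, fun ω => ?_, fun θ => ?_⟩
      · have h0 : 0 ≤ gB' ω := le_max_left _ _
        have h1 : gB' ω ≤ 1 := max_le zero_le_one (min_le_right _ _)
        by_cases h : ω ∈ A <;> constructor <;>
          simp [Set.indicator_apply, h, h0, h1, mul_nonneg, mul_le_one₀]
      · have hmul : (A ∩ B).indicator (fun _ => (1:ℝ))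
            = (A.indicator (fun _ => (1:ℝ))) * (B.indicator (fun _ => (1:ℝ))) := by
          funext ω
          by_cases h1 : ω ∈ A <;> by_cases h2 : ω ∈ B <;>
            simp [Set.indicator_apply, h1, h2]
        have hintAB : Integrable ((A.indicator (fun _ => (1:ℝ)))
            * (B.indicator (fun _ => (1:ℝ)))) (P θ) := by
          rw [← hmul]
          exact (integrable_const 1).indicator (hAm.inter hBm)
        have h1 := condExp_mul_of_stronglyMeasurable_left (μ := P θ)
          (stronglyMeasurable_const.indicator hA) hintAB
          ((integrable_const 1).indicator hBm)
        rw [hmul]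
        filter_upwards [h1, hgB' θ] with ω h1ω h2ω
        rw [h1ω, Pi.mul_apply, ← h2ω]
    · -- complements
      rintro u hum ⟨g, hgm, hgb, hgv⟩
      refine ⟨fun ω => 1 - g ω, measurable_const.sub hgm,
        fun ω => ⟨show (0:ℝ) ≤ 1 - g ω by linarith [(hgb ω).2],
          show (1:ℝ) - g ω ≤ 1 by linarith [(hgb ω).1]⟩, fun θ => ?_⟩
      have hind : uᶜ.indicator (fun _ => (1:ℝ))
          = (fun _ => (1:ℝ)) - u.indicator (fun _ => (1:ℝ)) := by
        funext ω
        by_cases h : ω ∈ u <;> simp [Set.indicator_apply, h]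
      rw [hind]
      have hsub := condExp_sub (μ := P θ) (m := mSuff)
        (integrable_const (1:ℝ)) ((integrable_const (1:ℝ)).indicator hum)
      filter_upwards [hsub, hgv θ] with ω h1ω h2ω
      rw [h1ω, Pi.sub_apply, condExp_const hSle, h2ω]
    · -- countable disjoint unions
      intro u hdisj humeas hC
      choose g hgm hgb hgv using hC
      set G : Ω → ℝ≥0∞ := fun ω => ∑' i, ENNReal.ofReal (g i ω) with hG
      have hGm : Measurable[mSuff] G :=
        Measurable.ennreal_tsum fun i => (hgm i).ennreal_ofReal
      have hGmΩ : Measurable[mΩ] G := hGm.mono hSle le_rfl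
      have hgim : ∀ i, Measurable[mΩ] (g i) := fun i => (hgm i).mono hSle le_rfl
      have hgint : ∀ i θ, Integrable (g i) (P θ) := by
        intro i θ
        refine (integrable_const (1:ℝ)).mono' (hgim i).aestronglyMeasurable
          (ae_of_all _ fun ω => ?_)
        rw [Real.norm_eq_abs, abs_of_nonneg (hgb i ω).1]
        exact (hgb i ω).2
      have huim : ∀ i, MeasurableSet[mΩ] (u i) := humeas
      have hUm : MeasurableSet[mΩ] (⋃ i, u i) := MeasurableSet.iUnion huim
      have key : ∀ θ, ∀ A : Set Ω, MeasurableSet[mSuff] A →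
          ∫⁻ ω in A, G ω ∂(P θ) = P θ ((⋃ i, u i) ∩ A) := by
        intro θ A hA
        have hAm : MeasurableSet[mΩ] A := hSle A hA
        have e1 : ∀ i, ∫⁻ ω in A, ENNReal.ofReal (g i ω) ∂(P θ) = P θ (u i ∩ A) := by
          intro i
          rw [← ofReal_integral_eq_lintegral_ofReal ((hgint i θ).restrict)
            (ae_of_all _ fun ω => (hgb i ω).1)]
          have e2 : ∫ ω in A, g i ω ∂(P θ) = (P θ (u i ∩ A)).toReal := by
            rw [integral_congr_ae (ae_restrict_of_ae (hgv i θ).symm),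
              setIntegral_condExp hSle ((integrable_const 1).indicator (huim i)) hA,
              setIntegral_indicator (huim i), setIntegral_const, Set.inter_comm]
            simp [Measure.real]
          rw [e2, ENNReal.ofReal_toReal (measure_ne_top _ _)]
        show ∫⁻ ω in A, ∑' i, ENNReal.ofReal (g i ω) ∂(P θ) = P θ ((⋃ i, u i) ∩ A)
        rw [lintegral_tsum (fun i => ((hgim i).ennreal_ofReal).aemeasurable)]
        rw [tsum_congr e1, ← measure_iUnion ?_ (fun i => (huim i).inter hAm),
          ← Set.iUnion_inter]
        intro i j hij
        exact (hdisj hij).mono Set.inter_subset_left Set.inter_subset_left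
      have hGfin : ∀ θ, ∀ᵐ ω ∂(P θ), G ω < ∞ := by
        intro θ
        refine ae_lt_top hGmΩ ?_
        rw [← setLIntegral_univ, key θ Set.univ MeasurableSet.univ]
        exact measure_ne_top _ _
      set g0 : Ω → ℝ := fun ω => (G ω).toReal with hg0
      have hg0m : Measurable[mSuff] g0 := hGm.ennreal_toReal
      have hvers : ∀ θ, g0 =ᵐ[P θ] (P θ)[(⋃ i, u i).indicator (fun _ => (1:ℝ))|mSuff] := by
        intro θ
        refine ae_eq_condExp_of_forall_setIntegral_eq hSle
          ((integrable_const 1).indicator hUm) (fun A hA _ => ?_) (fun A hA _ => ?_)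
          ((hg0m.stronglyMeasurable).aestronglyMeasurable)
        · exact integrable_toReal_of_lintegral_ne_top
            (hGmΩ.aemeasurable.restrict) (by rw [key θ A hA]; exact measure_ne_top _ _)
        · rw [integral_toReal (hGmΩ.aemeasurable.restrict) (ae_restrict_of_ae (hGfin θ)),
            key θ A hA, setIntegral_indicator hUm, setIntegral_const, Set.inter_comm]
          simp [Measure.real]
      refine ⟨fun ω => max 0 (min (g0 ω) 1),
        measurable_const.max (hg0m.min measurable_const), fun ω =>
          ⟨le_max_left _ _, max_le zero_le_one (min_le_right _ _)⟩, fun θ => ?_⟩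
      exact (clip_condexp_ae_eq' mSuff (P θ) hSle hUm (hvers θ).symm).symm
  -- Step 1: every ancillary event of `m'` is independent of every `mSuff`-event.
  have step1 : ∀ B : Set Ω, MeasurableSet[m'] B → ∀ θ, ∀ A : Set Ω, MeasurableSet[mSuff] A →
      P θ (B ∩ A) = P θ B * P θ A := by
    intro B hB θ A hA
    have hBm : MeasurableSet[mΩ] B := hm'le B hB
    set f : Ω → ℝ := B.indicator (fun _ => (1:ℝ)) with hf
    obtain ⟨g', hg'm, hg'b, hg⟩ := hsuffInd B hBm
    have hfint : ∀ θ', Integrable f (P θ') := fun θ' => (integrable_const 1).indicator hBm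
    have key : ∀ θ', g' =ᵐ[P θ'] (P θ')[f|mSuff] := fun θ' => (hg θ').symm
    have hint_g' : ∀ θ', ∫ ω, g' ω ∂(P θ') = (P θ' B).toReal := by
      intro θ'
      rw [integral_congr_ae (key θ'), integral_condExp hSle, hf,
        integral_indicator_const (1:ℝ) hBm]
      simp [Measure.real]
    set c : ℝ := (P θ B).toReal with hc
    have hYbd : ∃ C, ∀ ω, |g' ω - c| ≤ C := by
      refine ⟨1 + |c|, fun ω => ?_⟩
      have h1 : |g' ω| ≤ 1 := abs_le.mpr ⟨by linarith [(hg'b ω).1], (hg'b ω).2⟩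
      calc |g' ω - c| ≤ |g' ω| + |c| := abs_sub _ _
        _ ≤ 1 + |c| := by linarith
    have hYint : ∀ θ', ∫ ω, g' ω - c ∂(P θ') = 0 := by
      intro θ'
      have hint : Integrable g' (P θ') := by
        refine (integrable_const (1:ℝ)).mono'
          ((hg'm.mono hSle le_rfl).aestronglyMeasurable) (ae_of_all _ fun ω => ?_)
        rw [Real.norm_eq_abs, abs_of_nonneg (hg'b ω).1]
        exact (hg'b ω).2
      rw [integral_sub hint (integrable_const c), hint_g' θ', integral_const]
      have := hm'anc B hB θ' θ
      simp [this, hc]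
    have hY := hcomplete (fun ω => g' ω - c) (hg'm.sub measurable_const) hYbd hYint θ
    have hgc : g' =ᵐ[P θ] fun _ => c := by
      filter_upwards [hY] with ω hω
      have : g' ω - c = 0 := hω
      linarith
    have hA' : MeasurableSet[mΩ] A := hSle A hA
    have e1 : ∫ ω in A, f ω ∂(P θ) = (P θ (B ∩ A)).toReal := by
      rw [hf, setIntegral_indicator hBm, setIntegral_const, Set.inter_comm]
      simp [Measure.real]
    have e2 : ∫ ω in A, f ω ∂(P θ) = c * (P θ A).toReal := by
      rw [← setIntegral_condExp hSle (hfint θ) hA]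
      rw [integral_congr_ae (ae_restrict_of_ae (key θ).symm),
        integral_congr_ae (ae_restrict_of_ae hgc), setIntegral_const]
      simp [mul_comm, Measure.real]
    have hreal : (P θ (B ∩ A)).toReal = (P θ B).toReal * (P θ A).toReal := by
      rw [← e1, e2, hc]
    refine (ENNReal.toReal_eq_toReal_iff' (measure_ne_top _ _)
      (ENNReal.mul_ne_top (measure_ne_top _ _) (measure_ne_top _ _))).mp ?_
    rw [ENNReal.toReal_mul]
    exact hreal
  -- the indicator of `s` and its conditional expectation given `mAnc` under `P θ0`
  set fs : Ω → ℝ := s.indicator (fun _ => (1:ℝ)) with hfs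
  have hfsint : Integrable fs (P θ0) := (integrable_const 1).indicator hsm
  set h' : Ω → ℝ := fun ω => max 0 (min (((P θ0)[fs|mAnc]) ω) 1) with hh'
  have h'eq : h' =ᵐ[P θ0] (P θ0)[fs|mAnc] :=
    clip_condexp_ae_eq' mAnc (P θ0) hAle hsm (Filter.EventuallyEq.refl _ _)
  have hh'm : Measurable[mAnc] h' :=
    measurable_const.max ((stronglyMeasurable_condExp.measurable).min measurable_const)
  have hh'mΩ : Measurable[mΩ] h' := hh'm.mono hAle le_rfl
  have h'nonneg : ∀ ω, 0 ≤ h' ω := fun ω => le_max_left _ _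
  have h'le1 : ∀ ω, h' ω ≤ 1 := fun ω => max_le zero_le_one (min_le_right _ _)
  have h'int : ∀ (ν : Measure Ω), IsFiniteMeasure ν → (∀ t, ν t ≤ P θ0 t) →
      Integrable h' ν := by
    intro ν hν hle
    haveI := hν
    refine (integrable_const (1:ℝ)).mono' hh'mΩ.aestronglyMeasurable (ae_of_all _ fun ω => ?_)
    rw [Real.norm_eq_abs, abs_of_nonneg (h'nonneg ω)]
    exact h'le1 ω
  -- factorization of integrals of `mAnc`-measurable functions against `mSuff`-indicators
  have hfact : ∀ X : Ω → ℝ, Measurable[mAnc] X →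
      ∀ A : Set Ω, MeasurableSet[mSuff] A →
      ∫ ω, X ω * A.indicator (fun _ => (1:ℝ)) ω ∂(P θ0)
        = (∫ ω, X ω ∂(P θ0)) * (P θ0 A).toReal := by
    intro X hXm A hA
    set Y : Ω → ℝ := A.indicator (fun _ => (1:ℝ)) with hY
    have hYm : Measurable[mSuff] Y := measurable_const.indicator hA
    have hXY : IndepFun X Y (P θ0) := by
      rw [IndepFun_iff]
      rintro t1 t2 ⟨u1, hu1, rfl⟩ ⟨u2, hu2, rfl⟩
      exact step1 _ (hm'ge _ (hXm hu1)) θ0 _ (hYm hu2)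
    have := hXY.integral_mul_eq_mul_integral ((hXm.mono hAle le_rfl).aestronglyMeasurable)
      ((hYm.mono hSle le_rfl).aestronglyMeasurable)
    have hYint : ∫ ω, Y ω ∂(P θ0) = (P θ0 A).toReal := by
      rw [hY, integral_indicator_const _ (hSle A hA)]; simp [Measure.real]
    calc ∫ ω, X ω * Y ω ∂(P θ0) = ∫ ω, (X * Y) ω ∂(P θ0) := rfl
      _ = (∫ ω, X ω ∂(P θ0)) * (∫ ω, Y ω ∂(P θ0)) := this
      _ = (∫ ω, X ω ∂(P θ0)) * (P θ0 A).toReal := by rw [hYint]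
  -- the candidate density measure
  set νd : Measure Ω := (P θ0).withDensity (fun ω => ENNReal.ofReal (h' ω)) with hνd
  have hνuniv : νd Set.univ = P θ0 s := by
    rw [hνd, withDensity_apply _ MeasurableSet.univ, Measure.restrict_univ,
      ← ofReal_integral_eq_lintegral_ofReal
        (h'int (P θ0) inferInstance fun t => le_rfl) (ae_of_all _ h'nonneg),
      integral_congr_ae h'eq, integral_condExp hAle, hfs, integral_indicator_const _ hsm]
    simp [ENNReal.ofReal_toReal (measure_ne_top _ _)]
  have hνfin : ∀ t : Set Ω, νd t ≠ ∞ := by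
    intro t
    refine ne_of_lt (lt_of_le_of_lt (le_trans (measure_mono (Set.subset_univ t)) ?_)
      ENNReal.one_lt_top)
    rw [hνuniv]
    exact prob_le_one
  -- the key measure identity, by π-system induction
  have main : ∀ t : Set Ω, MeasurableSet[mΩ] t → P θ0 (s ∩ t) = νd t := by
    have H := MeasurableSpace.induction_on_inter (C := fun t _ => P θ0 (s ∩ t) = νd t)
      hgenπ hπ (by simp) ?_ ?_ ?_
    · exact fun t ht => H t ht
    · -- basic rectangles
      rintro u ⟨A, B, hA, hB, rfl⟩
      have hAm : MeasurableSet[mΩ] A := hSle A hA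
      have hBm : MeasurableSet[mΩ] B := hAle B hB
      have lhs : P θ0 (s ∩ (A ∩ B)) = P θ0 (s ∩ B) * P θ0 A := by
        have : s ∩ (A ∩ B) = (s ∩ B) ∩ A := by
          rw [Set.inter_comm A B, ← Set.inter_assoc]
        rw [this]
        exact step1 (s ∩ B) (hs.inter (hm'ge B hB)) θ0 A hA
      have hint1 : Integrable h' ((P θ0).restrict (A ∩ B)) :=
        h'int _ inferInstance fun t => Measure.restrict_apply_le _ _
      have rhs : νd (A ∩ B) = P θ0 (s ∩ B) * P θ0 A := by
        rw [hνd, withDensity_apply _ (hAm.inter hBm),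
          ← ofReal_integral_eq_lintegral_ofReal hint1 (ae_of_all _ h'nonneg)]
        have e1 : ∫ ω in A ∩ B, h' ω ∂(P θ0)
            = ∫ ω, (B.indicator h') ω * (A.indicator (fun _ => (1:ℝ))) ω ∂(P θ0) := by
          rw [← integral_indicator (hAm.inter hBm)]
          refine integral_congr_ae (ae_of_all _ fun ω => ?_)
          by_cases hωA : ω ∈ A <;> by_cases hωB : ω ∈ B <;>
            simp [Set.indicator_apply, hωA, hωB]
        have e2 : ∫ ω, (B.indicator h') ω ∂(P θ0) = (P θ0 (s ∩ B)).toReal := by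
          rw [integral_indicator hBm, integral_congr_ae (ae_restrict_of_ae h'eq),
            setIntegral_condExp hAle hfsint hB, hfs, setIntegral_indicator hsm,
            setIntegral_const, Set.inter_comm]
          simp [Measure.real]
        rw [e1, hfact (B.indicator h') (hh'm.indicator hB) A hA, e2,
          ENNReal.ofReal_mul ENNReal.toReal_nonneg,
          ENNReal.ofReal_toReal (measure_ne_top _ _),
          ENNReal.ofReal_toReal (measure_ne_top _ _)]
      rw [lhs, rhs]
    · -- complements
      intro t ht hC
      have h1 : s ∩ tᶜ = s \ (s ∩ t) := by
        ext ω; by_cases hω : ω ∈ s <;> simp [hω]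
      rw [h1, measure_diff Set.inter_subset_left (hsm.inter ht).nullMeasurableSet
        (measure_ne_top _ _), measure_compl ht (hνfin t), hνuniv, hC]
    · -- disjoint unions
      intro f hdisj hmeas hC
      rw [Set.inter_iUnion, measure_iUnion ?_ (fun i => hsm.inter (hmeas i)),
        measure_iUnion hdisj hmeas]
      · exact tsum_congr hC
      · intro i j hij
        exact (hdisj hij).mono Set.inter_subset_right Set.inter_subset_right
  -- derive a.e. equality of densities
  have haeeq : (s.indicator (fun _ => (1:ℝ≥0∞))) =ᵐ[P θ0] fun ω => ENNReal.ofReal (h' ω) := by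
    refine ae_eq_of_forall_setLIntegral_eq_of_sigmaFinite
      (measurable_const.indicator hsm) (ENNReal.measurable_ofReal.comp hh'mΩ)
      (fun t ht _ => ?_)
    rw [lintegral_indicator_const hsm, Measure.restrict_apply hsm, one_mul]
    have := main t ht
    rw [hνd, withDensity_apply _ ht] at this
    exact this
  -- conclude
  set t0 : Set Ω := h' ⁻¹' {1} with ht0def
  have ht0 : MeasurableSet[mAnc] t0 := hh'm (measurableSet_singleton 1)
  have hsub : s ∆ t0 ⊆ {ω | s.indicator (fun _ => (1:ℝ≥0∞)) ω ≠ ENNReal.ofReal (h' ω)} := by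
    intro ω hω
    rcases hω with ⟨hωs, hωt⟩ | ⟨hωt, hωs⟩
    · intro hEq
      simp only [Set.indicator_of_mem hωs] at hEq
      exact hωt (ENNReal.ofReal_eq_one.mp hEq.symm)
    · intro hEq
      have hω1 : h' ω = 1 := hωt
      simp only [Set.indicator_of_notMem hωs, hω1, ENNReal.ofReal_one] at hEq
      exact zero_ne_one hEq
  have hnull0 : P θ0 (s ∆ t0) = 0 :=
    measure_mono_null hsub (ae_iff.mp haeeq)
  exact ⟨t0, ht0, fun θ => (hac θ θ0) hnull0⟩
end
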